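/- Let X be a metric space and A ⊆ X. Then the following are equivalent: (i) A is a closed set containing no isolated points of X; (ii) there exists a continuous function f : X → ℝ such that 𝕃^∞(f) = L^∞(f) = A. -/

import Mathlib

open Metric Set Topology Filter

/-- `Lip^r f(x) = (1/r) · sup_{u ∈ B(x,r)} |f(x) − f(u)|`, with the convention
`sup ∅ = 0`, computed in `[0,∞]`. -/
noncomputable def lipR {X : Type*} [MetricSpace X] (f : X → ℝ) (x : X) (r : ℝ) : ENNReal :=
  (⨆ u ∈ Metric.ball x r, ENNReal.ofReal |f x - f u|) / ENNReal.ofReal r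

/-- The big Lipschitz derivative `Lip f(x) = limsup_{r→0⁺} Lip^r f(x)`. -/
noncomputable def bigLip {X : Type*} [MetricSpace X] (f : X → ℝ) (x : X) : ENNReal :=
  Filter.limsup (lipR f x) (𝓝[>] (0 : ℝ))

/-- The little Lipschitz derivative `lip f(x) = liminf_{r→0⁺} Lip^r f(x)`. -/
noncomputable def litLip {X : Type*} [MetricSpace X] (f : X → ℝ) (x : X) : ENNReal :=
  Filter.liminf (lipR f x) (𝓝[>] (0 : ℝ))

/-- The local Lipschitz derivative
`𝕃ip f(x) = limsup_{(u,v)→(x,x), u≠v} |f(u) − f(v)| / d(u,v)`. -/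
noncomputable def locLip {X : Type*} [MetricSpace X] (f : X → ℝ) (x : X) : ENNReal :=
  Filter.limsup (fun p : X × X => ENNReal.ofReal (|f p.1 - f p.2| / dist p.1 p.2))
    (𝓝[{p : X × X | p.1 ≠ p.2}] (x, x))

namespace BHMaux

noncomputable def sc (n : ℕ) : ℝ := (1/200 : ℝ) ^ n
noncomputable def wt (n : ℕ) : ℝ := (100 : ℝ) ^ n
lemma sc_pos (n : ℕ) : 0 < sc n := pow_pos (by norm_num) n
lemma wt_pos (n : ℕ) : 0 < wt n := pow_pos (by norm_num) n
lemma sc_anti : ∀ {m n : ℕ}, m ≤ n → sc n ≤ sc m := by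
  intro m n h; exact pow_le_pow_of_le_one (by norm_num) (by norm_num) h
lemma wt_mul_sc (n : ℕ) : wt n * sc n = (1/2 : ℝ) ^ n := by
  rw [wt, sc, ← mul_pow]; norm_num
lemma head_sum_le (N : ℕ) : (∑ n ∈ Finset.range N, wt n) ≤ wt N / 99 := by
  have h : (∑ n ∈ Finset.range N, wt n) = ((100:ℝ)^N - 1)/(100 - 1) := by
    simpa [wt] using geom_sum_eq (by norm_num : (100:ℝ) ≠ 1) N
  rw [h, wt]
  have : (1:ℝ) ≤ 100^N := one_le_pow₀ (by norm_num)
  norm_num; linarith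

variable {X : Type*} [MetricSpace X]

def Sep (t : ℝ) (C : Set X) : Prop := ∀ ⦃x⦄, x ∈ C → ∀ ⦃y⦄, y ∈ C → x ≠ y → t ≤ dist x y

lemma exists_net (A : Set X) {t : ℝ} (ht : 0 < t) {B : Set X} (hBA : B ⊆ A) (hB : Sep t B) :
    ∃ C : Set X, B ⊆ C ∧ C ⊆ A ∧ Sep t C ∧ ∀ a ∈ A, ∃ c ∈ C, dist a c < t := by
  set S : Set (Set X) := {C | B ⊆ C ∧ C ⊆ A ∧ Sep t C} with hS
  have hchain : ∀ c ⊆ S, IsChain (· ⊆ ·) c → c.Nonempty → ∃ ub ∈ S, ∀ s ∈ c, s ⊆ ub := by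
    intro c hcS hch ⟨c₀, hc₀⟩
    refine ⟨⋃₀ c, ⟨?_, ?_, ?_⟩, fun s hs => subset_sUnion_of_mem hs⟩
    · exact (hcS hc₀).1.trans (subset_sUnion_of_mem hc₀)
    · exact sUnion_subset fun s hs => (hcS hs).2.1
    · intro x hx y hy hxy
      obtain ⟨s₁, hs₁, hxs⟩ := hx
      obtain ⟨s₂, hs₂, hys⟩ := hy
      rcases hch.total hs₁ hs₂ with h | h
      · exact (hcS hs₂).2.2 (h hxs) hys hxy
      · exact (hcS hs₁).2.2 hxs (h hys) hxy
  obtain ⟨M, hBM, hM⟩ := zorn_subset_nonempty S hchain B ⟨Subset.rfl, hBA, hB⟩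
  refine ⟨M, hBM, hM.1.2.1, hM.1.2.2, ?_⟩
  intro a ha
  by_contra hcon
  push_neg at hcon
  have haM : a ∉ M := by
    intro haM
    have := hcon a haM
    simp at this
    linarith
  have hMa : Insert.insert a M ∈ S := by
    refine ⟨hBM.trans (subset_insert _ _), insert_subset ha hM.1.2.1, ?_⟩
    intro x hx y hy hxy
    rcases hx with rfl | hx
    · rcases hy with rfl | hy
      · exact absurd rfl hxy
      · exact hcon y hy
    · rcases hy with rfl | hy
      · rw [dist_comm]; exact hcon x hx
      · exact hM.1.2.2 hx hy hxy
  have := hM.2 hMa (subset_insert _ _)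
  exact haM (this (mem_insert a M))

def QP (A : Set X) (n : ℕ) (C : Set X) : Prop :=
  C ⊆ A ∧ Sep (sc n) C ∧ ∀ a ∈ A, ∃ c ∈ C, dist a c < sc n

lemma qp_base (A : Set X) : ∃ C : Set X, QP A 0 C := by
  obtain ⟨C, _, h2, h3, h4⟩ :=
    exists_net A (t := sc 0) (sc_pos 0) (empty_subset A)
      (fun x hx => absurd hx (notMem_empty x))
  exact ⟨C, h2, h3, h4⟩

lemma qp_step (A : Set X) (n : ℕ) (C : Set X) (h : QP A n C) :
    ∃ C', C ⊆ C' ∧ QP A (n+1) C' := by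
  have hsep : Sep (sc (n+1)) C := fun x hx y hy hxy =>
    le_trans (sc_anti (Nat.le_succ n)) (h.2.1 hx hy hxy)
  obtain ⟨C', h1, h2, h3, h4⟩ := exists_net A (t := sc (n+1)) (sc_pos _) h.1 hsep
  exact ⟨C', h1, h2, h3, h4⟩

noncomputable def netSeq (A : Set X) : (n : ℕ) → {C : Set X // QP A n C}
  | 0 => ⟨(qp_base A).choose, (qp_base A).choose_spec⟩
  | n+1 => ⟨(qp_step A n (netSeq A n).1 (netSeq A n).2).choose,
            (qp_step A n (netSeq A n).1 (netSeq A n).2).choose_spec.2⟩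

noncomputable def Cs (A : Set X) (n : ℕ) : Set X := (netSeq A n).1

lemma Cs_subA (A : Set X) (n : ℕ) : Cs A n ⊆ A := (netSeq A n).2.1
lemma Cs_sep (A : Set X) (n : ℕ) : Sep (sc n) (Cs A n) := (netSeq A n).2.2.1
lemma Cs_net (A : Set X) (n : ℕ) : ∀ a ∈ A, ∃ c ∈ Cs A n, dist a c < sc n :=
  (netSeq A n).2.2.2

lemma Cs_mono (A : Set X) (n : ℕ) : Cs A n ⊆ Cs A (n+1) := by
  rw [Cs, Cs, netSeq]
  exact (qp_step A n (netSeq A n).1 (netSeq A n).2).choose_spec.1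

lemma Cs_mono' (A : Set X) {m n : ℕ} (h : m ≤ n) : Cs A m ⊆ Cs A n := by
  induction n with
  | zero => rw [Nat.le_zero.mp h]
  | succ k ih =>
    rcases Nat.lt_or_ge m (k+1) with h' | h'
    · exact (ih (Nat.lt_succ_iff.mp h')).trans (Cs_mono A k)
    · rw [Nat.le_antisymm h h']

attribute [irreducible] netSeq Cs

variable (C : ℕ → Set X)

noncomputable def wf (n : ℕ) (v : X) : ℝ := min (infDist v (C n)) (sc n / 4)

lemma wf_nonneg (n : ℕ) (v : X) : 0 ≤ wf C n v :=
  le_min infDist_nonneg (by have := sc_pos n; linarith)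

lemma wf_le (n : ℕ) (v : X) : wf C n v ≤ sc n / 4 := min_le_right _ _

lemma abs_min_sub_min (a b c : ℝ) : |min a c - min b c| ≤ |a - b| := by
  rcases le_total a c with h1 | h1 <;> rcases le_total b c with h2 | h2 <;>
    simp [min_eq_left, min_eq_right, h1, h2] <;>
    cases abs_cases (a - b) <;> cases abs_cases (a - c) <;> cases abs_cases (c - b) <;>
    linarith

lemma wf_lip (n : ℕ) (u v : X) : |wf C n u - wf C n v| ≤ dist u v := by
  refine (abs_min_sub_min _ _ _).trans ?_
  rw [abs_sub_le_iff]
  constructor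
  · linarith [infDist_le_infDist_add_dist (x := u) (y := v) (s := C n)]
  · linarith [infDist_le_infDist_add_dist (x := v) (y := u) (s := C n), dist_comm u v]

lemma wf_abs_le (n : ℕ) (v : X) : |wf C n v| ≤ sc n / 4 := by
  rw [abs_of_nonneg (wf_nonneg C n v)]; exact wf_le C n v

lemma wf_of_mem {n : ℕ} {v : X} (hv : v ∈ C n) : wf C n v = 0 := by
  rw [wf, infDist_zero_of_mem hv]
  exact min_eq_left (by have := sc_pos n; linarith)

lemma summable_majorant : Summable (fun n : ℕ => (1/2:ℝ)^n / 4) :=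
  (summable_geometric_of_lt_one (by norm_num) (by norm_num)).div_const 4

lemma term_bound (n : ℕ) (v : X) : |wt n * wf C n v| ≤ (1/2:ℝ)^n / 4 := by
  rw [abs_mul, abs_of_nonneg (wt_pos n).le]
  calc wt n * |wf C n v| ≤ wt n * (sc n / 4) :=
        mul_le_mul_of_nonneg_left (wf_abs_le C n v) (wt_pos n).le
    _ = (1/2:ℝ)^n / 4 := by rw [← mul_div_assoc, wt_mul_sc]

lemma summable_term (v : X) : Summable (fun n => wt n * wf C n v) :=
  Summable.of_norm_bounded summable_majorant (fun n => by
    simpa only [Real.norm_eq_abs] using term_bound C n v)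

noncomputable def ff (v : X) : ℝ := ∑' n, wt n * wf C n v

lemma continuous_ff : Continuous (ff C) := by
  apply continuous_tsum (u := fun n => (1/2:ℝ)^n / 4)
  · exact fun n => continuous_const.mul ((continuous_infDist_pt (C n)).min continuous_const)
  · exact summable_majorant
  · intro n x; simpa only [Real.norm_eq_abs] using term_bound C n x

lemma diff_bound (n : ℕ) (u v : X) : |wt n * (wf C n u - wf C n v)| ≤ (1/2:ℝ)^n / 2 := by
  rw [abs_mul, abs_of_nonneg (wt_pos n).le]
  have h : |wf C n u - wf C n v| ≤ sc n / 2 := by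
    have h1 := wf_nonneg C n u; have h2 := wf_nonneg C n v
    have h3 := wf_le C n u; have h4 := wf_le C n v
    rw [abs_sub_le_iff]; constructor <;> linarith
  calc wt n * |wf C n u - wf C n v| ≤ wt n * (sc n / 2) :=
        mul_le_mul_of_nonneg_left h (wt_pos n).le
    _ = (1/2:ℝ)^n / 2 := by rw [← mul_div_assoc, wt_mul_sc]

lemma summable_diff (u v : X) : Summable (fun n => wt n * (wf C n u - wf C n v)) :=
  Summable.of_norm_bounded (g := fun n : ℕ => (1/2:ℝ)^n/2)
    ((summable_geometric_of_lt_one (by norm_num) (by norm_num)).div_const 2)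
    (fun n => by simpa only [Real.norm_eq_abs] using diff_bound C n u v)

lemma ff_sub (u v : X) : ff C u - ff C v = ∑' n, wt n * (wf C n u - wf C n v) := by
  rw [ff, ff, ← Summable.tsum_sub (summable_term C u) (summable_term C v)]
  congr 1; ext n; ring

lemma head_bound (N : ℕ) (u v : X) :
    |∑ n ∈ Finset.range N, wt n * (wf C n u - wf C n v)| ≤ wt N / 99 * dist u v := by
  refine (Finset.abs_sum_le_sum_abs _ _).trans ?_
  have h1 : ∀ n ∈ Finset.range N, |wt n * (wf C n u - wf C n v)| ≤ wt n * dist u v := by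
    intro n _
    rw [abs_mul, abs_of_nonneg (wt_pos n).le]
    exact mul_le_mul_of_nonneg_left (wf_lip C n u v) (wt_pos n).le
  refine (Finset.sum_le_sum h1).trans ?_
  rw [← Finset.sum_mul]
  exact mul_le_mul_of_nonneg_right (head_sum_le N) dist_nonneg

/-- The key oscillation estimate at points of `A`. -/
lemma key_osc (A : Set X) {x : X}
    (hni : ∀ ε > 0, ∃ u, u ≠ x ∧ dist u x < ε) (hx : x ∈ A) (N : ℕ) :
    ∃ u, u ≠ x ∧ dist u x ≤ 2 * sc N ∧
      wt N / 8 * dist u x ≤ |ff (Cs A) u - ff (Cs A) x| := by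
  have hsN := sc_pos N
  have hwN := wt_pos N
  by_cases hxC : x ∈ Cs A N
  · -- x is a net point
    obtain ⟨u, hux, hud⟩ := hni (sc N / 4) (by linarith)
    set d := dist u x with hd
    have hd0 : 0 < d := dist_pos.2 hux
    have hwfx : wf (Cs A) N x = 0 := wf_of_mem _ hxC
    have hinf : infDist u (Cs A N) = d := by
      refine le_antisymm (by simpa [hd] using infDist_le_dist_of_mem (x := u) hxC) ?_
      by_contra hlt
      push_neg at hlt
      obtain ⟨c, hc, hcd⟩ := (infDist_lt_iff ⟨x, hxC⟩).1 hlt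
      have hcx : c ≠ x := by
        intro h
        rw [h, ← hd] at hcd
        exact lt_irrefl _ hcd
      have := Cs_sep A N hxC hc (Ne.symm hcx)
      have : sc N ≤ dist x c := this
      have hxc : dist x c ≤ dist x u + dist u c := dist_triangle x u c
      rw [dist_comm x u] at hxc
      linarith
    have hwfu : wf (Cs A) N u = d := by
      rw [wf, hinf]; exact min_eq_left (by linarith)
    -- sum splitting
    set g : ℕ → ℝ := fun n => wt n * (wf (Cs A) n u - wf (Cs A) n x) with hg
    have hsum : Summable g := summable_diff _ u x
    have hsplit : ∑' n, g n = (∑ n ∈ Finset.range (N+1), g n) + ∑' m, g (m + (N+1)) :=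
      (Summable.sum_add_tsum_nat_add (N+1) hsum).symm
    have htail : 0 ≤ ∑' m, g (m + (N+1)) := by
      refine tsum_nonneg fun m => ?_
      have hxm : x ∈ Cs A (m + (N+1)) := Cs_mono' A (by omega) hxC
      have : wf (Cs A) (m + (N+1)) x = 0 := wf_of_mem _ hxm
      rw [hg]; simp only [this, sub_zero]
      exact mul_nonneg (wt_pos _).le (wf_nonneg _ _ _)
    have hgN : g N = wt N * d := by rw [hg]; simp [hwfu, hwfx]
    have hhead : |∑ n ∈ Finset.range N, g n| ≤ wt N / 99 * d := head_bound _ N u x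
    have hdiff : ff (Cs A) u - ff (Cs A) x = ∑' n, g n := ff_sub _ u x
    have : wt N / 8 * d ≤ ff (Cs A) u - ff (Cs A) x := by
      rw [hdiff, hsplit, Finset.sum_range_succ, hgN]
      have h99 := (abs_le.1 hhead).1
      have hprod : 0 ≤ wt N * d := mul_nonneg hwN.le hd0.le
      linarith
    refine ⟨u, hux, by linarith, ?_⟩
    exact this.trans (le_abs_self _)
  · -- x is not a net point
    have hne : (Cs A N).Nonempty := by
      obtain ⟨c, hc, _⟩ := Cs_net A N x hx
      exact ⟨c, hc⟩
    set t := infDist x (Cs A N) with ht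
    have htsc : t < sc N := by
      obtain ⟨c, hc, hcd⟩ := Cs_net A N x hx
      exact lt_of_le_of_lt (infDist_le_dist_of_mem hc) hcd
    have ht0 : 0 < t := by
      rcases lt_or_eq_of_le (infDist_nonneg (x := x) (s := Cs A N)) with h | h
      · exact h
      · exfalso
        have hcl : x ∈ closure (Cs A N) :=
          (mem_closure_iff_infDist_zero hne).2 h.symm
        rw [Metric.mem_closure_iff] at hcl
        obtain ⟨e₁, he₁, hd₁⟩ := hcl (sc N / 3) (by linarith)
        have hxe₁ : x ≠ e₁ := fun hh => hxC (hh ▸ he₁)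
        have hd₁0 : 0 < dist x e₁ := dist_pos.2 hxe₁
        obtain ⟨e₂, he₂, hd₂⟩ := hcl (min (dist x e₁) (sc N / 3)) (by positivity)
        have he12 : e₂ ≠ e₁ := by
          intro hh
          rw [hh] at hd₂
          exact absurd (lt_min_iff.1 hd₂).1 (lt_irrefl _)
        have := Cs_sep A N he₁ he₂ (Ne.symm he12)
        have htri : dist e₁ e₂ ≤ dist e₁ x + dist x e₂ := dist_triangle _ _ _
        rw [dist_comm e₁ x] at htri
        have h1 := (lt_min_iff.1 hd₂).2
        linarith
    obtain ⟨e, heC, heD⟩ := (infDist_lt_iff hne).1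
      (show t < (3/2) * t by linarith)
    set D := dist x e with hD
    have htD : t ≤ D := infDist_le_dist_of_mem heC
    have hD0 : 0 < D := lt_of_lt_of_le ht0 htD
    have hxe : x ≠ e := fun hh => hxC (hh ▸ heC)
    -- sum splitting for ff x - ff e
    set g : ℕ → ℝ := fun n => wt n * (wf (Cs A) n x - wf (Cs A) n e) with hg
    have hsum : Summable g := summable_diff _ x e
    have hsplit : ∑' n, g n = (∑ n ∈ Finset.range N, g n) + ∑' m, g (m + N) :=
      (Summable.sum_add_tsum_nat_add N hsum).symm
    have htail_nonneg : ∀ m, 0 ≤ g (m + N) := by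
      intro m
      have hem : e ∈ Cs A (m + N) := Cs_mono' A (by omega) heC
      have : wf (Cs A) (m + N) e = 0 := wf_of_mem _ hem
      rw [hg]; simp only [this, sub_zero]
      exact mul_nonneg (wt_pos _).le (wf_nonneg _ _ _)
    have hgN : wt N * min t (sc N / 4) ≤ ∑' m, g (m + N) := by
      have he0 : wf (Cs A) N e = 0 := wf_of_mem _ heC
      have hterm : g (0 + N) = wt N * min t (sc N / 4) := by
        show wt (0+N) * (wf (Cs A) (0+N) x - wf (Cs A) (0+N) e) = _
        rw [zero_add, he0, sub_zero, wf, ← ht]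
      rw [← hterm]
      have hs2 : Summable (fun m => g (m + N)) := (summable_nat_add_iff N).2 hsum
      exact Summable.le_tsum hs2 0 (fun j _ => htail_nonneg j)
    have hmin : D / 6 ≤ min t (sc N / 4) := by
      rcases le_total t (sc N / 4) with h | h
      · rw [min_eq_left h]; linarith
      · rw [min_eq_right h]; linarith
    have hhead : |∑ n ∈ Finset.range N, g n| ≤ wt N / 99 * D := head_bound _ N x e
    have hdiff : ff (Cs A) x - ff (Cs A) e = ∑' n, g n := ff_sub _ x e
    have hlow : wt N / 8 * D ≤ ff (Cs A) x - ff (Cs A) e := by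
      rw [hdiff, hsplit]
      have h99 := (abs_le.1 hhead).1
      have hx1 : wt N * (D / 6) ≤ ∑' m, g (m + N) :=
        le_trans (mul_le_mul_of_nonneg_left hmin hwN.le) hgN
      have hprod : 0 ≤ wt N * D := mul_nonneg hwN.le hD0.le
      linarith
    refine ⟨e, Ne.symm hxe, ?_, ?_⟩
    · rw [dist_comm]; rw [← hD]; linarith
    · rw [dist_comm e x, ← hD, abs_sub_comm]
      exact hlow.trans (le_abs_self _)



variable {X : Type*} [MetricSpace X]

lemma exists_near_of_not_isOpen {x : X} (h : ¬ IsOpen ({x} : Set X)) :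
    ∀ ε > 0, ∃ u, u ≠ x ∧ dist u x < ε := by
  intro ε hε
  by_contra hc
  push_neg at hc
  apply h
  have hball : {x} = ball x ε := by
    apply Subset.antisymm
    · intro u hu; rw [mem_singleton_iff] at hu; subst hu; exact mem_ball_self hε
    · intro u hu
      rcases eq_or_ne u x with rfl | hne
      · exact mem_singleton _
      · exact absurd (mem_ball.1 hu) (not_lt.2 (hc u hne))
  rw [hball]; exact isOpen_ball

lemma bigLip_top_of_witness {f : X → ℝ} {x : X}
    (h : ∀ K : ℝ, ∀ ε > 0, ∃ u, u ≠ x ∧ dist u x < ε ∧ K * dist u x ≤ |f x - f u|) :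
    bigLip f x = ⊤ := by
  apply ENNReal.eq_top_of_forall_nnreal_le
  intro K
  apply le_limsup_of_frequently_le (hu_le := Filter.isBoundedUnder_of ⟨⊤, fun _ => le_top⟩)
  rw [Filter.frequently_iff]
  intro U hU
  rw [mem_nhdsGT_iff_exists_Ioo_subset] at hU
  obtain ⟨ε, hε, hsub⟩ := hU
  rw [mem_Ioi] at hε
  obtain ⟨u, hux, hud, hK⟩ := h (2 * K) (ε/2) (by linarith)
  set d := dist u x with hd
  have hd0 : 0 < d := dist_pos.2 hux
  set r := 2 * d with hr
  have hr0 : 0 < r := by linarith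
  refine ⟨r, hsub ⟨hr0, by linarith⟩, ?_⟩
  have hm : u ∈ ball x r := by rw [mem_ball]; rw [← hd]; linarith
  have h1 : ENNReal.ofReal |f x - f u| ≤ ⨆ v ∈ ball x r, ENNReal.ofReal |f x - f v| :=
    le_biSup (fun v => ENNReal.ofReal |f x - f v|) hm
  calc (K : ENNReal) = ENNReal.ofReal (K : ℝ) := ENNReal.ofReal_coe_nnreal.symm
    _ ≤ ENNReal.ofReal (|f x - f u| / r) := by
        apply ENNReal.ofReal_le_ofReal
        rw [le_div_iff₀ hr0]
        calc (K : ℝ) * r = 2 * K * d := by rw [hr]; ring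
          _ ≤ |f x - f u| := hK
    _ = ENNReal.ofReal |f x - f u| / ENNReal.ofReal r := ENNReal.ofReal_div_of_pos hr0
    _ ≤ (⨆ v ∈ ball x r, ENNReal.ofReal |f x - f v|) / ENNReal.ofReal r :=
        ENNReal.div_le_div_right h1 _
    _ = lipR f x r := rfl

lemma locLip_top_of_witness {f : X → ℝ} {x : X}
    (h : ∀ K : ℝ, ∀ ε > 0, ∃ u, u ≠ x ∧ dist u x < ε ∧ K * dist u x ≤ |f x - f u|) :
    locLip f x = ⊤ := by
  apply ENNReal.eq_top_of_forall_nnreal_le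
  intro K
  apply le_limsup_of_frequently_le (hu_le := Filter.isBoundedUnder_of ⟨⊤, fun _ => le_top⟩)
  rw [Filter.frequently_iff]
  intro U hU
  rw [mem_nhdsWithin] at hU
  obtain ⟨O, hOopen, hOxx, hOsub⟩ := hU
  obtain ⟨V, hV, W, hW, hVW⟩ := mem_nhds_prod_iff.1 (hOopen.mem_nhds hOxx)
  obtain ⟨ε₁, hε₁, hba⟩ := Metric.mem_nhds_iff.1 hV
  obtain ⟨ε₂, hε₂, hbb⟩ := Metric.mem_nhds_iff.1 hW
  obtain ⟨u, hux, hud, hK⟩ := h K (min ε₁ ε₂) (lt_min hε₁ hε₂)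
  have hd0 : 0 < dist u x := dist_pos.2 hux
  refine ⟨(x, u), hOsub ⟨hVW ⟨hba (mem_ball_self hε₁), hbb ?_⟩, fun hh => hux (hh.symm)⟩, ?_⟩
  · rw [mem_ball]; exact lt_of_lt_of_le hud (min_le_right _ _)
  · show (K : ENNReal) ≤ ENNReal.ofReal (|f x - f u| / dist x u)
    rw [← ENNReal.ofReal_coe_nnreal]
    apply ENNReal.ofReal_le_ofReal
    rw [dist_comm x u, le_div_iff₀ hd0]
    exact hK


lemma witness_at_mem (A : Set X) {x : X} (hx : x ∈ A)
    (hni : ∀ ε > 0, ∃ u, u ≠ x ∧ dist u x < ε) :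
    ∀ K : ℝ, ∀ ε > 0, ∃ u, u ≠ x ∧ dist u x < ε ∧
      K * dist u x ≤ |ff (Cs A) x - ff (Cs A) u| := by
  intro K ε hε
  obtain ⟨N₁, hN₁⟩ := pow_unbounded_of_one_lt (8 * K) (show (1:ℝ) < 100 by norm_num)
  obtain ⟨N₂, hN₂⟩ := exists_pow_lt_of_lt_one (show (0:ℝ) < ε/2 by linarith)
    (show (1/200:ℝ) < 1 by norm_num)
  set N := max N₁ N₂ with hN
  have hw : 8 * K < wt N := by
    refine lt_of_lt_of_le hN₁ ?_
    rw [wt]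
    exact pow_le_pow_right₀ (by norm_num) (le_max_left _ _)
  have hs : sc N < ε/2 :=
    lt_of_le_of_lt (sc_anti (le_max_right N₁ N₂)) (by simpa [sc] using hN₂)
  obtain ⟨u, hux, hud, hK⟩ := key_osc A hni hx N
  refine ⟨u, hux, by linarith, ?_⟩
  rw [abs_sub_comm]
  refine le_trans ?_ hK
  exact mul_le_mul_of_nonneg_right (by linarith) dist_nonneg

lemma ff_lipschitz_near (A : Set X) {x : X} {δ : ℝ} (hδ : 0 < δ)
    (hfar : ∀ a ∈ A, δ ≤ dist x a) :
    ∃ Cst : ℝ, 0 ≤ Cst ∧ ∀ u v : X, dist u x < δ/2 → dist v x < δ/2 →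
      |ff (Cs A) u - ff (Cs A) v| ≤ Cst * dist u v := by
  obtain ⟨N, hN⟩ := exists_pow_lt_of_lt_one (show (0:ℝ) < 2*δ by linarith)
    (show (1/200:ℝ) < 1 by norm_num)
  have hsN : ∀ n, N ≤ n → sc n < 2*δ := fun n hn =>
    lt_of_le_of_lt (sc_anti hn) (by simpa [sc] using hN)
  refine ⟨∑ n ∈ Finset.range N, wt n, Finset.sum_nonneg (fun n _ => (wt_pos n).le), ?_⟩
  intro u v hu hv
  have hconst : ∀ n, N ≤ n → wf (Cs A) n u = wf (Cs A) n v := by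
    intro n hn
    rcases eq_empty_or_nonempty (Cs A n) with hemp | hne
    · rw [wf, wf, hemp, infDist_empty, infDist_empty]
    · have hkey : ∀ z : X, dist z x < δ/2 → wf (Cs A) n z = sc n / 4 := by
        intro z hz
        have hfarz : δ/2 ≤ infDist z (Cs A n) := by
          by_contra hc
          push_neg at hc
          obtain ⟨c, hcC, hcd⟩ := (infDist_lt_iff hne).1 hc
          have := hfar c (Cs_subA A n hcC)
          have htri : dist x c ≤ dist x z + dist z c := dist_triangle _ _ _
          rw [dist_comm x z] at htri
          linarith
        rw [wf]
        exact min_eq_right (by have := hsN n hn; linarith)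
      rw [hkey u hu, hkey v hv]
  have hdiff := ff_sub (Cs A) u v
  set g : ℕ → ℝ := fun n => wt n * (wf (Cs A) n u - wf (Cs A) n v) with hg
  have hsum : Summable g := summable_diff _ u v
  have hsplit : ∑' n, g n = (∑ n ∈ Finset.range N, g n) + ∑' m, g (m + N) :=
    (Summable.sum_add_tsum_nat_add N hsum).symm
  have htail : ∑' m, g (m + N) = 0 := by
    have hzero : ∀ m : ℕ, g (m + N) = 0 := fun m => by
      show wt (m+N) * (wf (Cs A) (m+N) u - wf (Cs A) (m+N) v) = 0
      rw [hconst (m+N) (by omega), sub_self, mul_zero]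
    simp [hzero]
  rw [hdiff, hsplit, htail, add_zero]
  refine (Finset.abs_sum_le_sum_abs _ _).trans ?_
  rw [Finset.sum_mul]
  apply Finset.sum_le_sum
  intro n _
  show |wt n * (wf (Cs A) n u - wf (Cs A) n v)| ≤ wt n * dist u v
  rw [abs_mul, abs_of_nonneg (wt_pos n).le]
  exact mul_le_mul_of_nonneg_left (wf_lip _ n u v) (wt_pos n).le

lemma locLip_ne_top_off (A : Set X) {x : X} {δ : ℝ} (hδ : 0 < δ)
    (hfar : ∀ a ∈ A, δ ≤ dist x a) : locLip (ff (Cs A)) x ≠ ⊤ := by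
  obtain ⟨Cst, hCst0, hC⟩ := ff_lipschitz_near A hδ hfar
  have hev : ∀ᶠ p : X × X in 𝓝[{p : X × X | p.1 ≠ p.2}] (x, x),
      ENNReal.ofReal (|ff (Cs A) p.1 - ff (Cs A) p.2| / dist p.1 p.2) ≤
        ENNReal.ofReal Cst := by
    have hW : (ball x (δ/2) ×ˢ ball x (δ/2) : Set (X × X)) ∈ 𝓝 (x, x) :=
      prod_mem_nhds (ball_mem_nhds _ (by linarith)) (ball_mem_nhds _ (by linarith))
    filter_upwards [nhdsWithin_le_nhds hW, self_mem_nhdsWithin] with p hpW hpS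
    have hne : p.1 ≠ p.2 := hpS
    have hd0 : 0 < dist p.1 p.2 := dist_pos.2 hne
    apply ENNReal.ofReal_le_ofReal
    rw [div_le_iff₀ hd0]
    exact hC p.1 p.2 (mem_ball.1 hpW.1) (mem_ball.1 hpW.2)
  exact ne_top_of_le_ne_top ENNReal.ofReal_ne_top (limsup_le_of_le (by isBoundedDefault) hev)

lemma bigLip_ne_top_off (A : Set X) {x : X} {δ : ℝ} (hδ : 0 < δ)
    (hfar : ∀ a ∈ A, δ ≤ dist x a) : bigLip (ff (Cs A)) x ≠ ⊤ := by
  obtain ⟨Cst, hCst0, hC⟩ := ff_lipschitz_near A hδ hfar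
  have hev : ∀ᶠ r in 𝓝[>] (0:ℝ), lipR (ff (Cs A)) x r ≤ ENNReal.ofReal Cst := by
    filter_upwards [Ioo_mem_nhdsGT
      (show (0:ℝ) < δ/2 by linarith)] with r hr
    obtain ⟨hr0, hrδ⟩ := hr
    rw [lipR, ENNReal.div_le_iff ((ENNReal.ofReal_pos.2 hr0).ne') ENNReal.ofReal_ne_top]
    apply iSup₂_le
    intro u hu
    rw [← ENNReal.ofReal_mul hCst0]
    apply ENNReal.ofReal_le_ofReal
    have hux : dist u x < δ/2 := lt_trans (mem_ball.1 hu) hrδ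
    calc |ff (Cs A) x - ff (Cs A) u| ≤ Cst * dist x u :=
          hC x u (by simpa using hδ) hux
      _ ≤ Cst * r := by
          refine mul_le_mul_of_nonneg_left ?_ hCst0
          rw [dist_comm]
          exact (mem_ball.1 hu).le
  exact ne_top_of_le_ne_top ENNReal.ofReal_ne_top (limsup_le_of_le (by isBoundedDefault) hev)

lemma construction (A : Set X) (hA : IsClosed A)
    (hni : ∀ x ∈ A, ¬ IsOpen ({x} : Set X)) :
    ∃ f : X → ℝ, Continuous f ∧
      {x : X | locLip f x = ⊤} = A ∧ {x : X | bigLip f x = ⊤} = A := by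
  have hfar : ∀ x ∉ A, ∃ δ : ℝ, 0 < δ ∧ ∀ a ∈ A, δ ≤ dist x a := by
    intro x hxA
    obtain ⟨δ, hδ0, hball⟩ := Metric.isOpen_iff.1 hA.isOpen_compl x hxA
    refine ⟨δ, hδ0, ?_⟩
    intro a ha
    by_contra hc
    push_neg at hc
    exact hball (mem_ball.2 (by rwa [dist_comm])) ha
  refine ⟨ff (Cs A), continuous_ff _, ?_, ?_⟩
  · ext x
    simp only [mem_setOf_eq]
    constructor
    · intro h
      by_contra hxA
      obtain ⟨δ, hδ0, hf⟩ := hfar x hxA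
      exact locLip_ne_top_off A hδ0 hf h
    · intro hxA
      exact locLip_top_of_witness (witness_at_mem A hxA (exists_near_of_not_isOpen (hni x hxA)))
  · ext x
    simp only [mem_setOf_eq]
    constructor
    · intro h
      by_contra hxA
      obtain ⟨δ, hδ0, hf⟩ := hfar x hxA
      exact bigLip_ne_top_off A hδ0 hf h
    · intro hxA
      exact bigLip_top_of_witness (witness_at_mem A hxA (exists_near_of_not_isOpen (hni x hxA)))

lemma closed_of_locLip (A : Set X) {f : X → ℝ}
    (hloc : {x : X | locLip f x = ⊤} = A) : IsClosed A := by
  rw [← hloc]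
  have hopen : IsOpen {x : X | locLip f x ≠ ⊤} := by
    rw [Metric.isOpen_iff]
    intro x hx
    have hxne : locLip f x ≠ ⊤ := hx
    set b := locLip f x + 1 with hb
    have hbt : b ≠ ⊤ := ENNReal.add_ne_top.2 ⟨hxne, ENNReal.one_ne_top⟩
    have hlb : locLip f x < b := ENNReal.lt_add_right hxne one_ne_zero
    have hev := eventually_lt_of_limsup_lt hlb (by isBoundedDefault)
    rw [eventually_iff, mem_nhdsWithin] at hev
    obtain ⟨O, hOopen, hOxx, hOsub⟩ := hev
    obtain ⟨V, hV, W, hW, hVW⟩ := mem_nhds_prod_iff.1 (hOopen.mem_nhds hOxx)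
    obtain ⟨ε₁, hε₁, hba⟩ := Metric.mem_nhds_iff.1 hV
    obtain ⟨ε₂, hε₂, hbb⟩ := Metric.mem_nhds_iff.1 hW
    set ε := min ε₁ ε₂ with hε
    have hε0 : 0 < ε := lt_min hε₁ hε₂
    refine ⟨ε/2, by linarith, ?_⟩
    intro y hy
    have hyx : dist y x < ε/2 := mem_ball.1 hy
    have hev2 : ∀ᶠ p : X × X in 𝓝[{p : X × X | p.1 ≠ p.2}] (y, y),
        ENNReal.ofReal (|f p.1 - f p.2| / dist p.1 p.2) ≤ b := by
      have hWy : (ball y (ε/2) ×ˢ ball y (ε/2) : Set (X × X)) ∈ 𝓝 (y, y) :=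
        prod_mem_nhds (ball_mem_nhds _ (by linarith)) (ball_mem_nhds _ (by linarith))
      filter_upwards [nhdsWithin_le_nhds hWy, self_mem_nhdsWithin] with p hpW hpS
      have h1 : p.1 ∈ ball x ε₁ := by
        rw [mem_ball]
        have := mem_ball.1 hpW.1
        calc dist p.1 x ≤ dist p.1 y + dist y x := dist_triangle _ _ _
          _ < ε/2 + ε/2 := by linarith
          _ = ε := by ring
          _ ≤ ε₁ := min_le_left _ _
      have h2 : p.2 ∈ ball x ε₂ := by
        rw [mem_ball]
        have := mem_ball.1 hpW.2
        calc dist p.2 x ≤ dist p.2 y + dist y x := dist_triangle _ _ _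
          _ < ε/2 + ε/2 := by linarith
          _ = ε := by ring
          _ ≤ ε₂ := min_le_right _ _
      exact le_of_lt (hOsub ⟨hVW ⟨hba h1, hbb h2⟩, hpS⟩)
    show locLip f y ≠ ⊤
    exact ne_top_of_le_ne_top hbt (limsup_le_of_le (by isBoundedDefault) hev2)
  have : {x : X | locLip f x = ⊤} = {x : X | locLip f x ≠ ⊤}ᶜ := by
    ext z; simp
  rw [this]
  exact hopen.isClosed_compl

lemma no_isolated_of_locLip (A : Set X) {f : X → ℝ}
    (hloc : {x : X | locLip f x = ⊤} = A) :
    ∀ x ∈ A, ¬ IsOpen ({x} : Set X) := by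
  intro x hxA hopen
  rw [← hloc] at hxA
  have hxtop : locLip f x = ⊤ := hxA
  have hbot : (𝓝[{p : X × X | p.1 ≠ p.2}] ((x : X), x)) = ⊥ := by
    rw [← Filter.empty_mem_iff_bot, mem_nhdsWithin]
    refine ⟨({x} : Set X) ×ˢ ({x} : Set X), hopen.prod hopen, ⟨rfl, rfl⟩, ?_⟩
    rintro ⟨a, b⟩ ⟨⟨ha, hb⟩, hab⟩
    rw [mem_singleton_iff] at ha hb
    exact absurd (ha.trans hb.symm) hab
  rw [locLip, hbot, Filter.limsup_bot] at hxtop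
  simp at hxtop

end BHMaux



/-- For a metric space `X` and `A ⊆ X`, the following are equivalent:
(i) `A` is closed and contains no isolated points of `X`;
(ii) there is a continuous `f : X → ℝ` with `𝕃^∞(f) = L^∞(f) = A`. -/
theorem closed_no_isolated_iff_exists_bigLip_locLip {X : Type*} [MetricSpace X] (A : Set X) :
    (IsClosed A ∧ ∀ x ∈ A, ¬ IsOpen ({x} : Set X)) ↔
      ∃ f : X → ℝ, Continuous f ∧
        {x : X | locLip f x = ⊤} = A ∧ {x : X | bigLip f x = ⊤} = A := by
  constructor
  · rintro ⟨hA, hni⟩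
    exact BHMaux.construction A hA hni
  · rintro ⟨f, -, hloc, -⟩
    exact ⟨BHMaux.closed_of_locLip A hloc, BHMaux.no_isolated_of_locLip A hloc⟩
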